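/- arXiv:1812.11939 — 3 statements merged into one kernel-verified Lean document; each statement's English description precedes it below -/
import Mathlib

section
/- Let (X_n) and (X̃_n) be sequences of real-valued random variables on a common probability space with X_n ≥ X̃_n almost surely for all n. If both X_n and X̃_n converge in distribution to the same probability distribution D, then X_n − X̃_n converges in probability (equivalently, in distribution) to 0. -/
open MeasureTheory Filter
open scoped BoundedContinuousFunction ENNReal Topology

/-- Clip function to `[-K, K]` as a bounded continuous function. -/
noncomputable def clipBCF (K : ℝ) (hK : 0 ≤ K) : ℝ →ᵇ ℝ :=
  BoundedContinuousFunction.ofNormedAddCommGroup (fun x => max (-K) (min K x))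
    (continuous_const.max (continuous_const.min continuous_id)) K (fun x => by
      rw [Real.norm_eq_abs, abs_le]
      exact ⟨le_max_left _ _, max_le (by linarith) (min_le_left _ _)⟩)

@[simp] lemma clipBCF_apply (K : ℝ) (hK : 0 ≤ K) (x : ℝ) :
    clipBCF K hK x = max (-K) (min K x) := rfl

/-- Tail indicator approximation as a bounded continuous function. -/
noncomputable def tailBCF (M : ℝ) : ℝ →ᵇ ℝ :=
  BoundedContinuousFunction.ofNormedAddCommGroup (fun x => min 1 (max 0 (|x| - M)))
    (continuous_const.min (continuous_const.max (continuous_abs.sub continuous_const))) 1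
    (fun x => by
      rw [Real.norm_eq_abs, abs_le]
      refine ⟨?_, min_le_left _ _⟩
      have := le_min zero_le_one (le_max_left (0:ℝ) (|x| - M))
      linarith)

@[simp] lemma tailBCF_apply (M : ℝ) (x : ℝ) :
    tailBCF M x = min 1 (max 0 (|x| - M)) := rfl

theorem dominated_same_limit_law_diff_tendsto_zero
    {Ω : Type*} [MeasurableSpace Ω] (μ : Measure Ω) [IsProbabilityMeasure μ]
    (X X' : ℕ → Ω → ℝ) (hX : ∀ n, Measurable (X n)) (hX' : ∀ n, Measurable (X' n))
    (hdom : ∀ n, ∀ᵐ ω ∂μ, X' n ω ≤ X n ω)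
    (D : Measure ℝ) [IsProbabilityMeasure D]
    (hXD : ∀ f : ℝ →ᵇ ℝ,
      Tendsto (fun n => ∫ ω, f (X n ω) ∂μ) atTop (nhds (∫ x, f x ∂D)))
    (hX'D : ∀ f : ℝ →ᵇ ℝ,
      Tendsto (fun n => ∫ ω, f (X' n ω) ∂μ) atTop (nhds (∫ x, f x ∂D))) :
    TendstoInMeasure μ (fun n ω => X n ω - X' n ω) atTop 0 := by
  -- integrability of bounded continuous compositions
  have hint : ∀ (f : ℝ →ᵇ ℝ) (Y : Ω → ℝ), Measurable Y →
      Integrable (fun ω => f (Y ω)) μ := fun f Y hY =>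
    ⟨(f.continuous.measurable.comp hY).aestronglyMeasurable,
      HasFiniteIntegral.of_bounded (C := ‖f‖) (ae_of_all _ fun ω => f.norm_coe_le_norm _)⟩
  rw [tendstoInMeasure_iff_dist]
  intro ε hε
  rw [ENNReal.tendsto_atTop_zero]
  intro η hη
  -- reduce to a real budget r
  obtain ⟨r, hr, hrη⟩ : ∃ r : ℝ, 0 < r ∧ ENNReal.ofReal r ≤ η := by
    rcases eq_or_ne η ∞ with h | h
    · exact ⟨1, one_pos, by simp [h]⟩
    · exact ⟨η.toReal, ENNReal.toReal_pos hη.ne' h, by rw [ENNReal.ofReal_toReal h]⟩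
  -- tightness of D: choose M with small tail
  have hmeas : ∀ M : ℕ, MeasurableSet {x : ℝ | (M : ℝ) ≤ |x|} := fun M =>
    (isClosed_le continuous_const continuous_abs).measurableSet
  have hiInter : (⋂ M : ℕ, {x : ℝ | (M : ℝ) ≤ |x|}) = ∅ := by
    ext x
    simp only [Set.mem_iInter, Set.mem_setOf_eq, Set.mem_empty_iff_false, iff_false, not_forall,
      not_le]
    exact exists_nat_gt |x|
  have hD0 : Tendsto (fun M : ℕ => D {x : ℝ | (M : ℝ) ≤ |x|}) atTop (𝓝 0) := by
    have := tendsto_measure_iInter_atTop (μ := D)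
      (fun M => (hmeas M).nullMeasurableSet)
      (fun i j hij x hx => by
        simp only [Set.mem_setOf_eq] at *
        exact le_trans (Nat.cast_le.mpr hij) hx)
      ⟨0, measure_ne_top D _⟩
    rwa [hiInter, measure_empty] at this
  obtain ⟨M, hM⟩ := (hD0.eventually_lt_const
    (show (0 : ℝ≥0∞) < ENNReal.ofReal (r / 4) by
      simp [ENNReal.ofReal_pos]; positivity)).exists
  -- the tail bounded continuous function
  set g : ℝ →ᵇ ℝ := tailBCF M with hg
  have hgD : ∫ x, g x ∂D < r / 4 := by
    have hle : ∀ x : ℝ, g x ≤ Set.indicator {x : ℝ | (M : ℝ) ≤ |x|} (fun _ => (1 : ℝ)) x := by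
      intro x
      by_cases hx : (M : ℝ) ≤ |x|
      · rw [Set.indicator_of_mem (show x ∈ {x : ℝ | (M:ℝ) ≤ |x|} from hx)]; exact min_le_left _ _
      · rw [Set.indicator_of_notMem (show x ∉ {x : ℝ | (M:ℝ) ≤ |x|} from hx)]
        simp only [hg, tailBCF_apply]
        push_neg at hx
        have hmax : max 0 (|x| - (M : ℝ)) = 0 := max_eq_left (by linarith)
        simp [hmax]
    have h1 : ∫ x, g x ∂D ≤ ∫ x, Set.indicator {x : ℝ | (M : ℝ) ≤ |x|} (fun _ => (1:ℝ)) x ∂D :=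
      integral_mono (g.integrable D) ((integrable_const (1:ℝ)).indicator (hmeas M)) hle
    have h2 : ∫ x, Set.indicator {x : ℝ | (M : ℝ) ≤ |x|} (fun _ => (1:ℝ)) x ∂D
        = (D {x : ℝ | (M : ℝ) ≤ |x|}).toReal := by
      rw [integral_indicator_const (1:ℝ) (hmeas M)]; simp [Measure.real]
    have h3 : (D {x : ℝ | (M : ℝ) ≤ |x|}).toReal < r / 4 := by
      rw [← ENNReal.ofReal_toReal (measure_ne_top D _)] at hM
      exact (ENNReal.ofReal_lt_ofReal_iff (by positivity)).mp hM
    linarith [h1, h2 ▸ h1]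
  -- the clip function
  have hK : (0 : ℝ) ≤ (M : ℝ) + 1 + ε := by positivity
  set K : ℝ := (M : ℝ) + 1 + ε with hKdef
  set f : ℝ →ᵇ ℝ := clipBCF K hK with hf
  -- eventual smallness of ∫ g(X'_n)
  have hgev : ∀ᶠ n in atTop, ∫ ω, g (X' n ω) ∂μ < r / 2 :=
    (hX'D g).eventually_lt_const (by linarith)
  -- ∫ f(X_n) - ∫ f(X'_n) → 0
  have hfev : ∀ᶠ n in atTop, ∫ ω, (f (X n ω) - f (X' n ω)) ∂μ < ε * (r / 2) := by
    have h0 : Tendsto (fun n => ∫ ω, f (X n ω) ∂μ - ∫ ω, f (X' n ω) ∂μ) atTop (𝓝 0) := by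
      simpa using (hXD f).sub (hX'D f)
    have := h0.eventually_lt_const (show (0:ℝ) < ε * (r/2) by positivity)
    filter_upwards [this] with n hn
    rwa [integral_sub (hint f (X n) (hX n)) (hint f (X' n) (hX' n))]
  obtain ⟨N, hN⟩ := eventually_atTop.mp (hgev.and hfev)
  refine ⟨N, fun n hn => ?_⟩
  obtain ⟨hgn, hfn⟩ := hN n hn
  -- a.e. set inclusion
  set A : Set Ω := {ω | ε ≤ dist ((fun ω => X n ω - X' n ω) ω) ((0 : Ω → ℝ) ω)} with hA
  set B : Set Ω := {ω | (1:ℝ) ≤ g (X' n ω)} with hB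
  set C : Set Ω := {ω | ε ≤ f (X n ω) - f (X' n ω)} with hC
  have hincl : A ≤ᵐ[μ] (B ∪ C : Set Ω) := by
    filter_upwards [hdom n] with ω hω hmem
    simp only [hA, Set.mem_setOf_eq, Pi.zero_apply, Real.dist_eq, sub_zero] at hmem
    simp only [Set.mem_union, hB, hC, Set.mem_setOf_eq]
    replace hmem : ε ≤ |X n ω - X' n ω| := hmem
    have hXX' : ε ≤ X n ω - X' n ω := by
      rwa [abs_of_nonneg (by linarith)] at hmem
    by_cases hb : (M : ℝ) + 1 ≤ |X' n ω|
    · left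
      simp only [Set.mem_setOf_eq, hg, tailBCF_apply]
      exact le_min le_rfl (le_max_of_le_right (by linarith))
    · right
      push_neg at hb
      simp only [Set.mem_setOf_eq, hf, clipBCF_apply]
      have hX'abs : -K ≤ X' n ω ∧ X' n ω ≤ K := by
        constructor <;> [linarith [neg_abs_le (X' n ω)]; linarith [le_abs_self (X' n ω)]]
      have h1 : max (-K) (min K (X' n ω)) = X' n ω := by
        rw [min_eq_right hX'abs.2, max_eq_right hX'abs.1]
      have h2 : X' n ω + ε ≤ max (-K) (min K (X n ω)) := by
        refine le_max_of_le_right (le_min ?_ (by linarith))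
        have : X' n ω ≤ |X' n ω| := le_abs_self _
        rw [hKdef]; linarith
      rw [h1]; linarith
  calc μ A
      ≤ μ (B ∪ C) := measure_mono_ae hincl
    _ ≤ μ B + μ C := measure_union_le _ _
    _ ≤ ENNReal.ofReal (r / 2) + ENNReal.ofReal (r / 2) := by
        gcongr
        · rw [ENNReal.le_ofReal_iff_toReal_le (measure_ne_top μ _) (by positivity)]
          have hmk := mul_meas_ge_le_integral_of_nonneg
            (f := fun ω => g (X' n ω))
            (ae_of_all _ fun ω => le_min zero_le_one (le_max_left _ _))
            (hint g (X' n) (hX' n)) 1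
          rw [one_mul] at hmk
          simp only [Measure.real] at hmk
          linarith
        · rw [ENNReal.le_ofReal_iff_toReal_le (measure_ne_top μ _) (by positivity)]
          have hnonneg : 0 ≤ᵐ[μ] fun ω => f (X n ω) - f (X' n ω) := by
            filter_upwards [hdom n] with ω hω
            simp only [Pi.zero_apply, sub_nonneg, hf, clipBCF_apply]
            exact max_le_max le_rfl (min_le_min le_rfl hω)
          have hmk := mul_meas_ge_le_integral_of_nonneg hnonneg
            ((hint f (X n) (hX n)).sub (hint f (X' n) (hX' n))) ε
          have := lt_of_le_of_lt hmk hfn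
          have := (mul_lt_mul_iff_right₀ hε).mp this
          simp only [Measure.real] at this
          linarith
    _ = ENNReal.ofReal r := by
        rw [← ENNReal.ofReal_add (by positivity) (by positivity)]; ring_nf
    _ ≤ η := hrη
end

section
/- Let 0 < r < 1, c > 0, and a ≥ 0. Then 1 − ∏_{i=0}^{∞} 1/(1 + c·r^{a}·r^{i}) ≤ 2·c·r^{a}/(1 − r). -/
theorem one_sub_tprod_shifted_le (r c a : ℝ) (hr0 : 0 < r) (hr1 : r < 1)
    (hc : 0 < c) (ha : 0 ≤ a) :
    1 - ∏' i : ℕ, 1 / (1 + c * r ^ a * r ^ i) ≤ 2 * c * r ^ a / (1 - r) := by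
  set d : ℝ := c * r ^ a with hd
  have hd0 : 0 < d := mul_pos hc (Real.rpow_pos_of_pos hr0 a)
  have hpos : ∀ i : ℕ, (0:ℝ) < 1 + d * r ^ i := fun i =>
    lt_add_of_lt_of_nonneg one_pos (le_of_lt (mul_pos hd0 (pow_pos hr0 i)))
  have hlognn : ∀ i : ℕ, 0 ≤ Real.log (1 + d * r ^ i) := fun i =>
    Real.log_nonneg (by nlinarith [mul_pos hd0 (pow_pos hr0 i)])
  have hlogle : ∀ i : ℕ, Real.log (1 + d * r ^ i) ≤ d * r ^ i := fun i => by
    have := Real.log_le_sub_one_of_pos (hpos i)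
    linarith
  have hsumgeo : Summable (fun i : ℕ => d * r ^ i) :=
    (summable_geometric_of_lt_one hr0.le hr1).mul_left d
  have hsumlog : Summable (fun i : ℕ => Real.log (1 + d * r ^ i)) :=
    Summable.of_nonneg_of_le hlognn hlogle hsumgeo
  -- f i = 1/(1+d r^i); log f i = - log(1+d r^i)
  have hflog : Summable (fun i : ℕ => Real.log (1 / (1 + d * r ^ i))) := by
    have : (fun i : ℕ => Real.log (1 / (1 + d * r ^ i)))
        = fun i : ℕ => - Real.log (1 + d * r ^ i) := by
      funext i
      rw [one_div, Real.log_inv]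
    rw [this]
    exact hsumlog.neg
  have hprod : (∏' i : ℕ, 1 / (1 + d * r ^ i))
      = Real.exp (∑' i : ℕ, Real.log (1 / (1 + d * r ^ i))) := by
    have := Real.rexp_tsum_eq_tprod (f := fun i => 1 / (1 + d * r ^ i))
      (fun i => by positivity) hflog
    exact this.symm
  have hS : (∑' i : ℕ, Real.log (1 / (1 + d * r ^ i)))
      = - ∑' i : ℕ, Real.log (1 + d * r ^ i) := by
    rw [← tsum_neg]
    congr 1
    funext i
    rw [one_div, Real.log_inv]
  set S : ℝ := ∑' i : ℕ, Real.log (1 + d * r ^ i) with hSdef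
  have hSle : S ≤ d / (1 - r) := by
    have h1 : S ≤ ∑' i : ℕ, d * r ^ i := Summable.tsum_le_tsum hlogle hsumlog hsumgeo
    have h2 : (∑' i : ℕ, d * r ^ i) = d / (1 - r) := by
      rw [tsum_mul_left, tsum_geometric_of_lt_one hr0.le hr1]
      field_simp
    linarith
  have hexp : 1 - S ≤ Real.exp (-S) := by
    have := Real.add_one_le_exp (-S)
    linarith
  rw [hprod, hS]
  have h2d : d / (1 - r) ≤ 2 * d / (1 - r) := by
    apply div_le_div_of_nonneg_right ?_ (by linarith)
    · linarith
  calc 1 - Real.exp (-S) ≤ S := by linarith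
    _ ≤ d / (1 - r) := hSle
    _ ≤ 2 * c * r ^ a / (1 - r) := by
        have h3 : 2 * c * r ^ a = 2 * d := by rw [hd]; ring
        rw [h3]; linarith
end

section
/- Let (X_t), (Y_t), (Z_t) be real random variables with X_t ≤ Y_t + Z_t almost surely for each t, suppose X_t ⇒ D and Y_t ⇒ D for the same distribution D as t → ∞, and Z_t → 0 in probability. Then X_t − Y_t → 0 in probability. -/
open MeasureTheory Filter
open scoped BoundedContinuousFunction ENNReal

noncomputable section SDAux

lemma sdClamp_abs_le' (c x : ℝ) : |max (-c) (min c x)| ≤ |c| := by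
  rw [abs_le]
  constructor
  · exact le_max_of_le_left (neg_le_neg (le_abs_self c))
  · exact max_le (neg_le_abs c) (le_trans (min_le_left _ _) (le_abs_self c))

/-- clamp to `[-c, c]` as a bounded continuous function. -/
def sdClamp (c : ℝ) : ℝ →ᵇ ℝ :=
  BoundedContinuousFunction.mkOfBound
    ⟨fun x => max (-c) (min c x), by fun_prop⟩ (2 * |c|)
    (by
      intro x y
      rw [Real.dist_eq]
      have h1 := sdClamp_abs_le' c x
      have h2 := sdClamp_abs_le' c y
      rw [abs_le] at *
      constructor <;> simp only [ContinuousMap.coe_mk] <;> linarith [h1.1, h1.2, h2.1, h2.2])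

lemma sdClamp_apply (c x : ℝ) : sdClamp c x = max (-c) (min c x) := rfl

lemma sdClamp_abs_le (c x : ℝ) : |sdClamp c x| ≤ |c| := sdClamp_abs_le' c x

lemma sdClamp_mono (c : ℝ) : Monotone (sdClamp c) :=
  fun _ _ h => max_le_max le_rfl (min_le_min le_rfl h)

lemma sdClamp_lip (c a b : ℝ) : |sdClamp c a - sdClamp c b| ≤ |a - b| := by
  rw [sdClamp_apply, sdClamp_apply]
  refine le_trans (abs_max_sub_max_le_max _ _ _ _) ?_
  refine max_le (by simp [abs_nonneg]) ?_
  refine le_trans (abs_min_sub_min_le_max _ _ _ _) ?_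
  exact max_le (by simp [abs_nonneg]) le_rfl

lemma sdClamp_key {K ε x y : ℝ} (hK : 0 ≤ K) (hx : |x| ≤ K) (hxy : x + ε ≤ y) (hε : 0 < ε) :
    min ε 1 ≤ sdClamp (K + 1) y - sdClamp (K + 1) x := by
  obtain ⟨hx1, hx2⟩ := abs_le.1 hx
  have hfx : sdClamp (K + 1) x = x := by
    rw [sdClamp_apply, min_eq_right (by linarith), max_eq_right (by linarith)]
  have hfy : sdClamp (K + 1) y = min (K + 1) y := by
    rw [sdClamp_apply, max_eq_right (le_min (by linarith) (by linarith))]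
  rw [hfx, hfy]
  rcases le_total (K + 1) y with h | h
  · rw [min_eq_left h]
    have := min_le_right ε 1
    linarith
  · rw [min_eq_right h]
    have := min_le_left ε 1
    linarith

/-- tightness cutoff `x ↦ min 1 (max 0 (|x| - N))` as a bounded continuous function. -/
def sdCut (N : ℝ) : ℝ →ᵇ ℝ :=
  BoundedContinuousFunction.mkOfBound
    ⟨fun x => min 1 (max 0 (|x| - N)), by fun_prop⟩ 1
    (by
      intro x y
      rw [Real.dist_eq, abs_le]
      simp only [ContinuousMap.coe_mk]
      have h1 : (0:ℝ) ≤ min 1 (max 0 (|x| - N)) := le_min one_pos.le (le_max_left _ _)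
      have h2 : (0:ℝ) ≤ min 1 (max 0 (|y| - N)) := le_min one_pos.le (le_max_left _ _)
      constructor <;> linarith [min_le_left (1:ℝ) (max 0 (|x| - N)),
        min_le_left (1:ℝ) (max 0 (|y| - N))])

lemma sdCut_apply (N x : ℝ) : sdCut N x = min 1 (max 0 (|x| - N)) := rfl

lemma sdCut_nonneg (N x : ℝ) : 0 ≤ sdCut N x := le_min one_pos.le (le_max_left _ _)

lemma sdCut_le_one (N x : ℝ) : sdCut N x ≤ 1 := min_le_left _ _

lemma sdCut_eq_one {N x : ℝ} (h : N + 1 ≤ |x|) : sdCut N x = 1 := by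
  rw [sdCut_apply, min_eq_left (le_max_of_le_right (by linarith))]

lemma sdCut_eq_zero {N x : ℝ} (h : |x| ≤ N) : sdCut N x = 0 := by
  rw [sdCut_apply, max_eq_left (by linarith), min_eq_right zero_le_one]

lemma sdIntegrable {Ω : Type*} [MeasurableSpace Ω] (μ : Measure Ω) [IsProbabilityMeasure μ]
    (f : ℝ →ᵇ ℝ) {X : Ω → ℝ} (hX : Measurable X) :
    Integrable (fun ω => f (X ω)) μ :=
  (memLp_top_of_bound ((f.continuous.measurable.comp hX).aestronglyMeasurable) ‖f‖
    (Eventually.of_forall fun ω => f.norm_coe_le_norm _)).integrable le_top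

end SDAux


theorem slow_decorrelation_scheme
    {Ω : Type*} [MeasurableSpace Ω] (μ : Measure Ω) [IsProbabilityMeasure μ]
    (X Y Z : ℝ → Ω → ℝ)
    (hXm : ∀ t, Measurable (X t)) (hYm : ∀ t, Measurable (Y t))
    (hZm : ∀ t, Measurable (Z t))
    (hdom : ∀ t, ∀ᵐ ω ∂μ, X t ω ≤ Y t ω + Z t ω)
    (D : Measure ℝ) [IsProbabilityMeasure D]
    (hXD : ∀ f : ℝ →ᵇ ℝ,
      Tendsto (fun t => ∫ ω, f (X t ω) ∂μ) atTop (nhds (∫ x, f x ∂D)))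
    (hYD : ∀ f : ℝ →ᵇ ℝ,
      Tendsto (fun t => ∫ ω, f (Y t ω) ∂μ) atTop (nhds (∫ x, f x ∂D)))
    (hZ : TendstoInMeasure μ Z atTop 0) :
    TendstoInMeasure μ (fun t ω => X t ω - Y t ω) atTop 0 := by
  rw [tendstoInMeasure_iff_dist]
  intro ε hε
  rw [ENNReal.tendsto_nhds_zero]
  intro η hη
  obtain ⟨r, hr0, hrη⟩ := ENNReal.lt_iff_exists_nnreal_btwn.1 hη
  set r' : ℝ := (r : ℝ) with hr'def
  have hr' : (0:ℝ) < r' := by exact_mod_cast ENNReal.coe_pos.1 hr0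
  -- tightness of D: choose N
  obtain ⟨N, hN⟩ : ∃ N : ℕ, D {x : ℝ | (N : ℝ) ≤ |x|} < ENNReal.ofReal (r' / 6) := by
    have hmeas : ∀ n : ℕ, NullMeasurableSet {x : ℝ | (n : ℝ) ≤ |x|} D := fun n =>
      (measurableSet_le measurable_const measurable_abs).nullMeasurableSet
    have hanti : Antitone fun n : ℕ => {x : ℝ | (n : ℝ) ≤ |x|} := by
      intro m n hmn x hx
      simp only [Set.mem_setOf_eq] at hx ⊢
      have hmn' : (m : ℝ) ≤ (n : ℝ) := Nat.cast_le.2 hmn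
      linarith
    have hempty : ⋂ n : ℕ, {x : ℝ | (n : ℝ) ≤ |x|} = (∅ : Set ℝ) := by
      ext x
      simp only [Set.mem_iInter, Set.mem_setOf_eq, Set.mem_empty_iff_false, iff_false, not_forall,
        not_le]
      obtain ⟨n, hn⟩ := exists_nat_gt |x|
      exact ⟨n, hn⟩
    have htend := tendsto_measure_iInter_atTop hmeas hanti ⟨0, measure_ne_top D _⟩
    rw [hempty, measure_empty] at htend
    exact (htend.eventually_lt_const (ENNReal.ofReal_pos.2 (by positivity))).exists
  set K : ℝ := (N : ℝ) + 1 with hKdef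
  have hK : (0:ℝ) ≤ K := by positivity
  set c : ℝ := K + 1 with hcdef
  have hc : (0:ℝ) < c := by positivity
  set ε' : ℝ := min ε 1 with hε'def
  have hε' : (0:ℝ) < ε' := lt_min hε one_pos
  set δ : ℝ := ε' * r' / 9 with hδdef
  have hδ : (0:ℝ) < δ := by positivity
  set f : ℝ →ᵇ ℝ := sdClamp c with hfdef
  set g : ℝ →ᵇ ℝ := sdCut (N : ℝ) with hgdef
  -- the sets
  set A : ℝ → Set Ω := fun t => {ω | ε ≤ Y t ω - X t ω ∧ |X t ω| ≤ K} with hAdef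
  set B : ℝ → Set Ω := fun t => {ω | δ ≤ dist (Z t ω) 0} with hBdef
  set C : ℝ → Set Ω := fun t => {ω | K ≤ |X t ω|} with hCdef
  have hAmeas : ∀ t, MeasurableSet (A t) := fun t =>
    (measurableSet_le measurable_const ((hYm t).sub (hXm t))).inter
      (measurableSet_le (hXm t).abs measurable_const)
  have hBmeas : ∀ t, MeasurableSet (B t) := fun t => by
    have : B t = {ω | δ ≤ |Z t ω|} := by
      ext ω; simp [hBdef, Real.dist_0_eq_abs]
    rw [this]
    exact measurableSet_le measurable_const (hZm t).abs
  have hCmeas : ∀ t, MeasurableSet (C t) :=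
    fun t => measurableSet_le measurable_const (hXm t).abs
  -- Step 1: key integral inequality for A
  have hkey : ∀ t, ε' * (μ (A t)).toReal ≤
      ((∫ ω, f (Y t ω) ∂μ) - ∫ ω, f (X t ω) ∂μ) + δ + 2 * c * (μ (B t)).toReal := by
    intro t
    have hintY := sdIntegrable μ f (hYm t)
    have hintX := sdIntegrable μ f (hXm t)
    have hintB : Integrable ((B t).indicator fun _ => 2 * c) μ :=
      (integrable_const (2 * c)).indicator (hBmeas t)
    have hintA : Integrable ((A t).indicator fun _ => ε') μ :=
      (integrable_const ε').indicator (hAmeas t)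
    have hmono : ∫ ω, ((A t).indicator fun _ => ε') ω ∂μ ≤
        ∫ ω, (f (Y t ω) - f (X t ω) + δ + ((B t).indicator fun _ => 2 * c) ω) ∂μ := by
      refine integral_mono_ae hintA (((hintY.sub hintX).add (integrable_const δ)).add hintB) ?_
      filter_upwards [hdom t] with ω hω
      have hfabs : ∀ x : ℝ, |f x| ≤ c := fun x => by
        simpa [abs_of_pos hc] using sdClamp_abs_le c x
      have hB0 : (0:ℝ) ≤ ((B t).indicator fun _ => 2 * c) ω :=
        Set.indicator_nonneg (fun _ _ => by positivity) ω
      by_cases hωA : ω ∈ A t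
      · rw [Set.indicator_of_mem hωA]
        obtain ⟨h1, h2⟩ := hωA
        have hkey2 : min ε 1 ≤ f (Y t ω) - f (X t ω) := by
          rw [hfdef, hcdef]
          exact sdClamp_key hK h2 (by linarith) hε
        have := min_le_left ε 1
        simp only [← hε'def] at hkey2
        linarith
      · rw [Set.indicator_of_notMem hωA]
        by_cases hωB : ω ∈ B t
        · rw [Set.indicator_of_mem hωB]
          have h1 := hfabs (Y t ω)
          have h2 := hfabs (X t ω)
          rw [abs_le] at h1 h2
          linarith [h1.1, h2.2]
        · have hZsmall : |Z t ω| < δ := by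
            have : ¬ δ ≤ dist (Z t ω) 0 := hωB
            rw [Real.dist_0_eq_abs] at this
            linarith [not_le.1 this]
          rw [Set.indicator_of_notMem hωB]
          have hmonof : f (X t ω) ≤ f (Y t ω + Z t ω) := sdClamp_mono c hω
          have hlip : |f (Y t ω + Z t ω) - f (Y t ω)| ≤ |Y t ω + Z t ω - Y t ω| :=
            sdClamp_lip c _ _
          have : |Y t ω + Z t ω - Y t ω| = |Z t ω| := by ring_nf
          rw [this, abs_le] at hlip
          linarith [hlip.1, abs_nonneg (Z t ω)]
    have i1 : Integrable (fun ω => f (Y t ω) - f (X t ω)) μ := hintY.sub hintX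
    have i2 : Integrable (fun ω => f (Y t ω) - f (X t ω) + δ) μ := i1.add (integrable_const δ)
    rw [integral_indicator_const _ (hAmeas t), integral_add i2 hintB,
      integral_add i1 (integrable_const δ), integral_sub hintY hintX, integral_const,
      integral_indicator_const _ (hBmeas t)] at hmono
    simp only [measureReal_def, measure_univ, ENNReal.toReal_one, smul_eq_mul, one_mul] at hmono
    linarith [hmono]
  -- limits of the f-integrals
  have hd : Tendsto (fun t => (∫ ω, f (Y t ω) ∂μ) - ∫ ω, f (X t ω) ∂μ) atTop (nhds 0) := by
    simpa using (hYD f).sub (hXD f)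
  -- eventual bound for A
  have hAev : ∀ᶠ t in atTop, μ (A t) ≤ ENNReal.ofReal (r' / 3) := by
    have hev1 : ∀ᶠ t in atTop, (∫ ω, f (Y t ω) ∂μ) - ∫ ω, f (X t ω) ∂μ ≤ δ :=
      hd.eventually_le_const hδ
    have hev2 : ∀ᶠ t in atTop, 2 * c * (μ (B t)).toReal ≤ δ := by
      have hBtend : Tendsto (fun t => μ (B t)) atTop (nhds 0) := tendstoInMeasure_iff_dist.1 hZ δ hδ
      have hpos : (0:ℝ≥0∞) < ENNReal.ofReal (δ / (2 * c)) := ENNReal.ofReal_pos.2 (by positivity)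
      filter_upwards [hBtend.eventually_le_const hpos] with t ht
      have := ENNReal.toReal_le_of_le_ofReal (by positivity) ht
      calc 2 * c * (μ (B t)).toReal ≤ 2 * c * (δ / (2 * c)) := by
            gcongr
        _ = δ := by field_simp
    filter_upwards [hev1, hev2] with t h1 h2
    have h3 := hkey t
    have h4 : ε' * (μ (A t)).toReal ≤ ε' * (r' / 3) := by
      rw [hδdef] at h1 h2 h3
      linarith
    have h5 : (μ (A t)).toReal ≤ r' / 3 := le_of_mul_le_mul_left (by linarith) hε'
    exact (ENNReal.le_ofReal_iff_toReal_le (measure_ne_top μ _) (by positivity)).2 h5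
  -- eventual bound for C (tightness)
  have hCev : ∀ᶠ t in atTop, μ (C t) ≤ ENNReal.ofReal (r' / 3) := by
    have hgD : ∫ x, g x ∂D < r' / 3 := by
      have hle : ∫ x, g x ∂D ≤ (D {x : ℝ | (N : ℝ) ≤ |x|}).toReal := by
        have h1 : Integrable (fun x => g x) D := sdIntegrable D g measurable_id
        have h2 : Integrable ({x : ℝ | (N : ℝ) ≤ |x|}.indicator fun _ => (1:ℝ)) D :=
          (integrable_const 1).indicator (measurableSet_le measurable_const measurable_abs)
        have h3 : ∀ x, g x ≤ ({x : ℝ | (N : ℝ) ≤ |x|}.indicator fun _ => (1:ℝ)) x := by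
          intro x
          rw [Set.indicator_apply]
          by_cases hx : x ∈ {y : ℝ | (N : ℝ) ≤ |y|}
          · rw [if_pos hx]
            exact sdCut_le_one _ _
          · rw [if_neg hx]
            simp only [Set.mem_setOf_eq, not_le] at hx
            rw [hgdef, sdCut_eq_zero hx.le]
        calc ∫ x, g x ∂D ≤ ∫ x, ({x : ℝ | (N : ℝ) ≤ |x|}.indicator fun _ => (1:ℝ)) x ∂D :=
              integral_mono h1 h2 h3
          _ = (D {x : ℝ | (N : ℝ) ≤ |x|}).toReal := by
              rw [integral_indicator_const _ (measurableSet_le measurable_const measurable_abs)]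
              simp [measureReal_def]
      have := ENNReal.toReal_lt_of_lt_ofReal hN
      linarith
    filter_upwards [(hXD g).eventually_lt_const hgD] with t ht
    have hle : (μ (C t)).toReal ≤ ∫ ω, g (X t ω) ∂μ := by
      have h1 : Integrable ((C t).indicator fun _ => (1:ℝ)) μ :=
        (integrable_const 1).indicator (hCmeas t)
      have h2 := sdIntegrable μ g (hXm t)
      have h3 : ∀ ω, ((C t).indicator fun _ => (1:ℝ)) ω ≤ g (X t ω) := by
        intro ω
        by_cases hω : ω ∈ C t
        · rw [Set.indicator_of_mem hω, hgdef, sdCut_eq_one]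
          exact hω
        · rw [Set.indicator_of_notMem hω]
          exact sdCut_nonneg _ _
      calc (μ (C t)).toReal = ∫ ω, ((C t).indicator fun _ => (1:ℝ)) ω ∂μ := by
            rw [integral_indicator_const _ (hCmeas t)]; simp [measureReal_def]
        _ ≤ ∫ ω, g (X t ω) ∂μ := integral_mono h1 h2 h3
    exact (ENNReal.le_ofReal_iff_toReal_le (measure_ne_top μ _) (by positivity)).2
      (by linarith)
  -- eventual bound for the Z term
  have hZev : ∀ᶠ t in atTop, μ {ω | ε ≤ dist (Z t ω) 0} ≤ ENNReal.ofReal (r' / 3) := by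
    have := tendstoInMeasure_iff_dist.1 hZ ε hε
    exact this.eventually_le_const (ENNReal.ofReal_pos.2 (by positivity))
  -- assemble
  filter_upwards [hZev, hAev, hCev] with t h1 h2 h3
  have hsub : μ {ω | ε ≤ dist ((fun t ω => X t ω - Y t ω) t ω) ((0 : Ω → ℝ) ω)} ≤
      μ ({ω | ε ≤ dist (Z t ω) 0} ∪ (A t ∪ C t)) := by
    refine measure_mono_ae ?_
    filter_upwards [hdom t] with ω hω hmem
    simp only [Set.mem_setOf_eq, Pi.zero_apply, Real.dist_0_eq_abs] at hmem
    rcases le_abs.1 hmem with hcase | hcase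
    · left
      simp only [Set.mem_setOf_eq, Real.dist_0_eq_abs]
      have : ε ≤ Z t ω := by linarith
      exact this.trans (le_abs_self _)
    · right
      rcases le_total (|X t ω|) K with hx | hx
      · exact Or.inl ⟨by linarith, hx⟩
      · exact Or.inr hx
  calc μ {ω | ε ≤ dist ((fun t ω => X t ω - Y t ω) t ω) ((0 : Ω → ℝ) ω)} ≤
        μ ({ω | ε ≤ dist (Z t ω) 0} ∪ (A t ∪ C t)) := hsub
    _ ≤ μ {ω | ε ≤ dist (Z t ω) 0} + μ (A t ∪ C t) := measure_union_le _ _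
    _ ≤ μ {ω | ε ≤ dist (Z t ω) 0} + (μ (A t) + μ (C t)) :=
        add_le_add_right (measure_union_le _ _) _
    _ ≤ ENNReal.ofReal (r' / 3) + (ENNReal.ofReal (r' / 3) + ENNReal.ofReal (r' / 3)) := by
        gcongr
    _ = ENNReal.ofReal r' := by
        rw [← ENNReal.ofReal_add (by positivity) (by positivity),
          ← ENNReal.ofReal_add (by positivity) (by positivity)]
        ring_nf
    _ = (r : ℝ≥0∞) := by rw [hr'def, ENNReal.ofReal_coe_nnreal]
    _ ≤ η := hrη.le
end
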